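/- Let Λ be a set, m, and L : Λ × ℝ^m → ℝ uniformly superlinear in the fiber variable: for every K ≥ 0 there exists C(K) ∈ ℝ such that L(x,v) ≥ K‖v‖ + C(K) for all x ∈ Λ and all v ∈ ℝ^m. Fix a < b, r ≥ 0 and c ∈ ℝ, and let F be a family of triples (x, ζ, λ) where λ ∈ [0,r], x : [a,b] → Λ, ζ : [a,b] → ℝ^m is measurable with ‖ζ‖ integrable, t ↦ L(x(t), ζ(t)) is measurable, and ∫_a^b e^{λt} L(x(t), ζ(t)) dt ≤ c. Then both families of functions { t ↦ e^{λt}‖ζ(t)‖ : (x,ζ,λ) ∈ F } and { t ↦ ‖ζ(t)‖ : (x,ζ,λ) ∈ F } are uniformly integrable on [a,b]. -/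

import Mathlib

open MeasureTheory Set Real

/-- For a uniformly superlinear Lagrangian, a family of (curve, velocity,
discount) triples with uniformly bounded discounted action has uniformly integrable
families of (discounted) speeds. -/
theorem stmt_2 {Λ : Type*} (m : ℕ) (L : Λ → EuclideanSpace ℝ (Fin m) → ℝ)
    (hsl : ∀ K ≥ (0:ℝ), ∃ C : ℝ, ∀ (x : Λ) (v : EuclideanSpace ℝ (Fin m)),
      K * ‖v‖ + C ≤ L x v)
    (a b r c : ℝ) (hab : a < b) (hr : 0 ≤ r)
    (F : Set ((ℝ → Λ) × (ℝ → EuclideanSpace ℝ (Fin m)) × ℝ))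
    (hF : ∀ p ∈ F, p.2.2 ∈ Icc 0 r ∧
      Measurable p.2.1 ∧
      IntegrableOn (fun t => ‖p.2.1 t‖) (Icc a b) ∧
      IntegrableOn (fun t => exp (p.2.2 * t) * L (p.1 t) (p.2.1 t)) (Icc a b) ∧
      ∫ t in a..b, exp (p.2.2 * t) * L (p.1 t) (p.2.1 t) ≤ c) :
    (∀ ε > (0:ℝ), ∃ δ > (0:ℝ), ∀ p ∈ F, ∀ E ⊆ Icc a b, MeasurableSet E →
      volume E < ENNReal.ofReal δ →
      ∫ t in E, |exp (p.2.2 * t) * ‖p.2.1 t‖| < ε) ∧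
    (∀ ε > (0:ℝ), ∃ δ > (0:ℝ), ∀ p ∈ F, ∀ E ⊆ Icc a b, MeasurableSet E →
      volume E < ENNReal.ofReal δ →
      ∫ t in E, |‖p.2.1 t‖| < ε) := by
  set M := Real.exp (r * (|a| + |b|)) with hMdef
  have hM1 : (1:ℝ) ≤ M := Real.one_le_exp (by positivity)
  have hM0 : (0:ℝ) < M := lt_of_lt_of_le one_pos hM1
  -- bound on |λ * t| for λ ∈ [0,r], t ∈ [a,b]
  have habs : ∀ lam ∈ Icc (0:ℝ) r, ∀ t ∈ Icc a b, |lam * t| ≤ r * (|a| + |b|) := by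
    intro lam hlam t ht
    rw [abs_mul, abs_of_nonneg hlam.1]
    have ht' : |t| ≤ |a| + |b| := by
      rw [abs_le]
      constructor
      · linarith [ht.1, neg_abs_le a, abs_nonneg b]
      · linarith [ht.2, le_abs_self b, abs_nonneg a]
    exact mul_le_mul hlam.2 ht' (abs_nonneg t) hr
  have hexp_le : ∀ lam ∈ Icc (0:ℝ) r, ∀ t ∈ Icc a b, Real.exp (lam * t) ≤ M :=
    fun lam hlam t ht => Real.exp_le_exp.mpr (le_trans (le_abs_self _) (habs lam hlam t ht))
  have hexp_inv : ∀ lam ∈ Icc (0:ℝ) r, ∀ t ∈ Icc a b, (1:ℝ) ≤ M * Real.exp (lam * t) := by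
    intro lam hlam t ht
    have h1 : Real.exp (-(lam * t)) ≤ M :=
      Real.exp_le_exp.mpr (le_trans (neg_le_abs _) (habs lam hlam t ht))
    have h2 : Real.exp (-(lam * t)) * Real.exp (lam * t) = 1 := by
      rw [← Real.exp_add]; simp
    calc (1:ℝ) = Real.exp (-(lam * t)) * Real.exp (lam * t) := h2.symm
      _ ≤ M * Real.exp (lam * t) :=
        mul_le_mul_of_nonneg_right h1 (Real.exp_pos _).le
  obtain ⟨C0, hC0⟩ := hsl 0 le_rfl
  -- key uniform integrability statement (without absolute values)
  have key : ∀ ε > (0:ℝ), ∃ δ > (0:ℝ), ∀ p ∈ F, ∀ E ⊆ Icc a b, MeasurableSet E →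
      volume E < ENNReal.ofReal δ →
      ∫ t in E, Real.exp (p.2.2 * t) * ‖p.2.1 t‖ < ε := by
    intro ε hε
    set B := |c| + |C0| * M * (b - a) with hBdef
    have hB : 0 ≤ B := by
      have : 0 ≤ |C0| * M * (b - a) := mul_nonneg (mul_nonneg (abs_nonneg C0) hM0.le) (by linarith)
      have := abs_nonneg c
      linarith
    set K := 2 * (B + 1) / ε with hKdef
    have hK : 0 < K := div_pos (by linarith) hε
    obtain ⟨C, hC⟩ := hsl K hK.le
    have hCM1 : (0:ℝ) < |C| * M + 1 := by nlinarith [abs_nonneg C, hM0]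
    refine ⟨ε * K / (2 * (|C| * M + 1)), div_pos (mul_pos hε hK) (by linarith), ?_⟩
    intro p hp E hE hEm hEv
    obtain ⟨hlam, hζm, hζint, hhint, hact⟩ := hF p hp
    set lam := p.2.2 with hlamdef
    set ζ := p.2.1 with hζdef
    set g : ℝ → ℝ := fun t => Real.exp (lam * t) * ‖ζ t‖ with hgdef
    set h : ℝ → ℝ := fun t => Real.exp (lam * t) * L (p.1 t) (ζ t) with hhdef
    set δ := ε * K / (2 * (|C| * M + 1)) with hδdef
    have hδpos : 0 < δ := div_pos (mul_pos hε hK) (by linarith)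
    -- measure of E
    have hEfin : volume E < ⊤ := lt_of_lt_of_le hEv le_top
    set mE := (volume E).toReal with hmEdef
    have hmE0 : 0 ≤ mE := ENNReal.toReal_nonneg
    have hmEδ : mE < δ := ENNReal.toReal_lt_of_lt_ofReal hEv
    -- integrability of g on Icc a b
    have hgint : IntegrableOn g (Icc a b) := by
      apply Integrable.bdd_mul (c := M) hζint
      · exact (Real.measurable_exp.comp (measurable_id.const_mul lam)).aestronglyMeasurable
      · refine (ae_restrict_iff' measurableSet_Icc).mpr (ae_of_all _ ?_)
        intro t ht
        rw [Real.norm_eq_abs, Real.abs_exp]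
        exact hexp_le lam hlam t ht
    have hgintE : IntegrableOn g E := hgint.mono_set hE
    have hhintE : IntegrableOn h E := hhint.mono_set hE
    have hexpint : IntegrableOn (fun t => Real.exp (lam * t)) (Icc a b) :=
      (Real.continuous_exp.comp (continuous_const.mul continuous_id)).integrableOn_Icc
    have hexpintE : IntegrableOn (fun t => Real.exp (lam * t)) E := hexpint.mono_set hE
    -- pointwise bound: K * g t + C * exp(lam*t) ≤ h t
    have hpt : ∀ t, K * g t + C * Real.exp (lam * t) ≤ h t := by
      intro t
      have := hC (p.1 t) (ζ t)
      have hexp := (Real.exp_pos (lam * t)).le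
      calc K * g t + C * Real.exp (lam * t)
          = Real.exp (lam * t) * (K * ‖ζ t‖ + C) := by ring
        _ ≤ Real.exp (lam * t) * L (p.1 t) (ζ t) :=
            mul_le_mul_of_nonneg_left this hexp
        _ = h t := rfl
    -- ∫_E h ≤ B
    have hIcc_h : ∫ t in Icc a b, h t ≤ c := by
      have : ∫ t in Icc a b, h t = ∫ t in a..b, h t := by
        rw [intervalIntegral.integral_of_le hab.le, integral_Icc_eq_integral_Ioc]
      rw [this]; exact hact
    have hdiff_h : -(|C0| * M * (b - a)) ≤ ∫ t in Icc a b \ E, h t := by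
      have hsub : Icc a b \ E ⊆ Icc a b := diff_subset
      have hms : MeasurableSet (Icc a b \ E) := measurableSet_Icc.diff hEm
      have hint' : IntegrableOn h (Icc a b \ E) := hhint.mono_set hsub
      have hvol : (volume (Icc a b \ E)).toReal ≤ b - a := by
        have h1 : volume (Icc a b \ E) ≤ volume (Icc a b) := measure_mono hsub
        have h2 : volume (Icc a b) = ENNReal.ofReal (b - a) := Real.volume_Icc
        calc (volume (Icc a b \ E)).toReal ≤ (volume (Icc a b)).toReal :=
              ENNReal.toReal_mono (by rw [h2]; exact ENNReal.ofReal_ne_top) h1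
          _ = b - a := by rw [h2, ENNReal.toReal_ofReal (by linarith)]
      calc -(|C0| * M * (b - a))
          ≤ -(|C0| * M) * (volume (Icc a b \ E)).toReal := by
            rw [neg_mul]
            apply neg_le_neg
            exact mul_le_mul_of_nonneg_left hvol (by positivity)
        _ = ∫ _ in Icc a b \ E, -(|C0| * M) := by rw [setIntegral_const, smul_eq_mul, measureReal_def]; ring
        _ ≤ ∫ t in Icc a b \ E, h t := by
            apply setIntegral_mono_on (integrableOn_const ?_) hint' hms ?_
            · apply LT.lt.ne
              exact lt_of_le_of_lt (measure_mono hsub)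
                (by rw [Real.volume_Icc]; exact ENNReal.ofReal_lt_top)
            · intro t ht
              have ht' := hsub ht
              have h1 : -(|C0| * M) ≤ C0 * Real.exp (lam * t) := by
                have hb1 : -|C0| ≤ C0 := neg_abs_le C0
                have hb2 : Real.exp (lam * t) ≤ M := hexp_le lam hlam t ht'
                have hep := (Real.exp_pos (lam * t)).le
                nlinarith [abs_nonneg C0]
              have h2 : C0 * Real.exp (lam * t) ≤ h t := by
                have := hC0 (p.1 t) (ζ t)
                simp only [zero_mul, zero_add] at this
                calc C0 * Real.exp (lam * t) ≤ L (p.1 t) (ζ t) * Real.exp (lam * t) :=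
                      mul_le_mul_of_nonneg_right this (Real.exp_pos _).le
                  _ = h t := by rw [hhdef]; ring
              linarith
    have hEh : ∫ t in E, h t ≤ B := by
      have hsplit : ∫ t in Icc a b \ E, h t = (∫ t in Icc a b, h t) - ∫ t in E, h t :=
        integral_diff hEm hhint hE
      have := hdiff_h
      rw [hsplit] at this
      have hcB : c ≤ |c| := le_abs_self c
      rw [hBdef]
      linarith
    -- ∫_E exp(lam t) ≤ M * mE
    have hEexp : ∫ t in E, Real.exp (lam * t) ≤ M * mE := by
      calc ∫ t in E, Real.exp (lam * t) ≤ ∫ _ in E, M := by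
            apply setIntegral_mono_on hexpintE (integrableOn_const hEfin.ne) hEm
            intro t ht
            exact hexp_le lam hlam t (hE ht)
        _ = M * mE := by rw [setIntegral_const, smul_eq_mul, mul_comm, measureReal_def]
    have hEexp0 : 0 ≤ ∫ t in E, Real.exp (lam * t) :=
      setIntegral_nonneg hEm (fun t _ => (Real.exp_pos _).le)
    -- main estimate
    have hmain : K * ∫ t in E, g t ≤ B + |C| * M * mE := by
      have hint1 : ∫ t in E, (K * g t + C * Real.exp (lam * t))
          = K * (∫ t in E, g t) + C * ∫ t in E, Real.exp (lam * t) := by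
        rw [integral_add (hgintE.const_mul K) (hexpintE.const_mul C),
          integral_const_mul, integral_const_mul]
      have hle : ∫ t in E, (K * g t + C * Real.exp (lam * t)) ≤ ∫ t in E, h t := by
        apply setIntegral_mono_on ((hgintE.const_mul K).add (hexpintE.const_mul C)) hhintE hEm
        intro t _
        exact hpt t
      rw [hint1] at hle
      have hCbound : -(|C| * M * mE) ≤ C * ∫ t in E, Real.exp (lam * t) := by
        have h1 : -|C| ≤ C := neg_abs_le C
        nlinarith [abs_nonneg C]
      linarith
    -- conclude
    have hgoal : K * ∫ t in E, g t < K * ε := by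
      have h1 : |C| * M * mE < (|C| * M + 1) * δ := by
        have h0 : 0 ≤ |C| * M := mul_nonneg (abs_nonneg C) hM0.le
        have := mul_le_mul_of_nonneg_left hmEδ.le h0
        nlinarith
      have h2 : (|C| * M + 1) * δ = ε * K / 2 := by
        rw [hδdef]; field_simp; try ring
      have h3 : K * ε = 2 * (B + 1) := by
        rw [hKdef]; field_simp; try ring
      rw [h3]
      have : ε * K / 2 = B + 1 := by rw [hKdef]; field_simp; try ring
      linarith
    exact lt_of_mul_lt_mul_left hgoal hK.le
  constructor
  · intro ε hε
    obtain ⟨δ, hδ, hkey⟩ := key ε hε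
    refine ⟨δ, hδ, ?_⟩
    intro p hp E hE hEm hEv
    have := hkey p hp E hE hEm hEv
    simpa only [abs_mul, Real.abs_exp, abs_norm] using this
  · intro ε hε
    obtain ⟨δ, hδ, hkey⟩ := key (ε / M) (by positivity)
    refine ⟨δ, hδ, ?_⟩
    intro p hp E hE hEm hEv
    obtain ⟨hlam, hζm, hζint, hhint, hact⟩ := hF p hp
    have hkey' := hkey p hp E hE hEm hEv
    have hgint : IntegrableOn (fun t => Real.exp (p.2.2 * t) * ‖p.2.1 t‖) (Icc a b) := by
      apply Integrable.bdd_mul (c := M) hζint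
      · exact (Real.measurable_exp.comp (measurable_id.const_mul p.2.2)).aestronglyMeasurable
      · refine (ae_restrict_iff' measurableSet_Icc).mpr (ae_of_all _ ?_)
        intro t ht
        rw [Real.norm_eq_abs, Real.abs_exp]
        exact hexp_le p.2.2 hlam t ht
    have hle : ∫ t in E, ‖p.2.1 t‖ ≤ M * ∫ t in E, Real.exp (p.2.2 * t) * ‖p.2.1 t‖ := by
      rw [← integral_const_mul]
      apply setIntegral_mono_on (hζint.mono_set hE) ((hgint.mono_set hE).const_mul M) hEm
      intro t ht
      have h1 : (1:ℝ) ≤ M * Real.exp (p.2.2 * t) := hexp_inv p.2.2 hlam t (hE ht)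
      calc ‖p.2.1 t‖ = 1 * ‖p.2.1 t‖ := (one_mul _).symm
        _ ≤ (M * Real.exp (p.2.2 * t)) * ‖p.2.1 t‖ :=
            mul_le_mul_of_nonneg_right h1 (norm_nonneg _)
        _ = M * (Real.exp (p.2.2 * t) * ‖p.2.1 t‖) := by ring
    have : ∫ t in E, ‖p.2.1 t‖ < ε := by
      calc ∫ t in E, ‖p.2.1 t‖ ≤ M * ∫ t in E, Real.exp (p.2.2 * t) * ‖p.2.1 t‖ := hle
        _ < M * (ε / M) := by exact mul_lt_mul_of_pos_left hkey' hM0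
        _ = ε := by field_simp
    simpa only [abs_norm] using this
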